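/- For any real r < B/2 with B a positive integer, lim_{m→∞} (log |W(m, ⌊r·m⌋, B)|)/m = log(B+1) − I(r, B), where I(r, B) = sup_t (t·r − log((Σ_{j=0}^{B} e^{jt})/(B+1))). -/

import Mathlib

open Filter Finset

namespace Stmt11

variable (B : ℕ)

/-- unnormalized partition function -/
noncomputable def S (t : ℝ) : ℝ := ∑ j : Fin (B+1), Real.exp ((j : ℝ) * t)

lemma S_eq_range (t : ℝ) : S B t = ∑ j ∈ Finset.range (B+1), Real.exp ((j : ℝ) * t) := by
  rw [S, Fin.sum_univ_eq_sum_range (fun j => Real.exp ((j : ℝ) * t))]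

lemma one_le_S (t : ℝ) : 1 ≤ S B t := by
  have h := Finset.single_le_sum (f := fun j : Fin (B+1) => Real.exp ((j : ℝ) * t))
    (fun j _ => (Real.exp_pos _).le) (Finset.mem_univ (0 : Fin (B+1)))
  simpa [S] using h

lemma S_pos (t : ℝ) : 0 < S B t := lt_of_lt_of_le one_pos (one_le_S B t)

noncomputable def f (t : ℝ) : ℝ := Real.log (S B t)

lemma f_nonneg (t : ℝ) : 0 ≤ f B t := Real.log_nonneg (one_le_S B t)

noncomputable def w (t : ℝ) (j : Fin (B+1)) : ℝ := Real.exp ((j : ℝ) * t) / S B t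

lemma w_nonneg (t : ℝ) (j : Fin (B+1)) : 0 ≤ w B t j :=
  div_nonneg (Real.exp_pos _).le (S_pos B t).le

lemma sum_w (t : ℝ) : ∑ j : Fin (B+1), w B t j = 1 := by
  simp only [w, ← Finset.sum_div]
  exact div_self (S_pos B t).ne'

noncomputable def mu (t : ℝ) : ℝ := ∑ j : Fin (B+1), w B t j * (j : ℝ)

lemma mu_nonneg (t : ℝ) : 0 ≤ mu B t :=
  Finset.sum_nonneg fun j _ => mul_nonneg (w_nonneg B t j) (by positivity : (0:ℝ) ≤ (j:ℝ))

variable (B : ℕ)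

/-- the feasible set as a finset of bounded tuples -/
def A (m L : ℕ) : Finset (Fin m → Fin (B+1)) :=
  Finset.univ.filter (fun x => ∑ i, (x i : ℕ) ≤ L)

def N (m L : ℕ) : ℕ := (A B m L).card

lemma one_le_N (m L : ℕ) : 1 ≤ N B m L := by
  have h0 : (fun _ => (0 : Fin (B+1)) : Fin m → Fin (B+1)) ∈ A B m L := by
    simp [A]
  exact Finset.card_pos.mpr ⟨_, h0⟩

lemma card_eq (m L : ℕ) :
    Nat.card {x : Fin m → ℕ // (∑ i, x i ≤ L) ∧ ∀ i, x i ≤ B} = N B m L := by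
  have e : {x : Fin m → ℕ // (∑ i, x i ≤ L) ∧ ∀ i, x i ≤ B} ≃
      {y : Fin m → Fin (B+1) // ∑ i, (y i : ℕ) ≤ L} :=
    { toFun := fun x => ⟨fun i => ⟨x.1 i, Nat.lt_succ_of_le (x.2.2 i)⟩, by
        simpa using x.2.1⟩
      invFun := fun y => ⟨fun i => (y.1 i : ℕ), ⟨y.2, fun i => Nat.lt_succ_iff.mp (y.1 i).2⟩⟩
      left_inv := fun x => rfl
      right_inv := fun y => rfl }
  rw [Nat.card_congr e, Nat.card_eq_fintype_card, Fintype.card_subtype]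
  rfl


lemma sum_pi (m : ℕ) (g : Fin m → Fin (B+1) → ℝ) :
    ∑ x : Fin m → Fin (B+1), ∏ i, g i (x i) = ∏ i, ∑ j, g i j :=
  (Fintype.prod_sum g).symm

variable (t : ℝ)

noncomputable def W (m : ℕ) (x : Fin m → Fin (B+1)) : ℝ := ∏ i, w B t (x i)

lemma W_nonneg (m : ℕ) (x : Fin m → Fin (B+1)) : 0 ≤ W B t m x :=
  Finset.prod_nonneg fun i _ => w_nonneg B t (x i)

lemma sum_W (m : ℕ) : ∑ x : Fin m → Fin (B+1), W B t m x = 1 := by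
  simp only [W]
  rw [sum_pi]
  simp [sum_w]

lemma exp_coord (m : ℕ) (c : Fin (B+1) → ℝ) (i0 : Fin m) :
    ∑ x : Fin m → Fin (B+1), W B t m x * c (x i0) = ∑ j, w B t j * c j := by
  have key : ∀ x : Fin m → Fin (B+1),
      W B t m x * c (x i0) = ∏ i, (w B t (x i) * if i = i0 then c (x i) else 1) := by
    intro x
    rw [Finset.prod_mul_distrib, Finset.prod_ite_eq' Finset.univ i0 (fun i => c (x i))]
    simp [W]
  rw [Finset.sum_congr rfl (fun x _ => key x),
    sum_pi B m (fun i j => w B t j * if i = i0 then c j else 1)]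
  rw [Finset.prod_eq_single i0 (fun i _ hi => by simp [hi, sum_w]) (by simp)]
  simp

lemma exp_pair (m : ℕ) (c : Fin (B+1) → ℝ) (i0 i1 : Fin m) (hne : i0 ≠ i1) :
    ∑ x : Fin m → Fin (B+1), W B t m x * (c (x i0) * c (x i1)) =
      (∑ j, w B t j * c j) ^ 2 := by
  have key : ∀ x : Fin m → Fin (B+1),
      W B t m x * (c (x i0) * c (x i1)) =
        ∏ i, (w B t (x i) * ((if i = i0 then c (x i) else 1) *
          (if i = i1 then c (x i) else 1))) := by
    intro x
    rw [Finset.prod_mul_distrib, Finset.prod_mul_distrib,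
      Finset.prod_ite_eq' Finset.univ i0 (fun i => c (x i)),
      Finset.prod_ite_eq' Finset.univ i1 (fun i => c (x i))]
    simp [W]
  rw [Finset.sum_congr rfl (fun x _ => key x),
    sum_pi B m (fun i j => w B t j * ((if i = i0 then c j else 1) * (if i = i1 then c j else 1)))]
  have houter : ∀ i ∈ Finset.univ, i ∉ ({i0, i1} : Finset (Fin m)) →
      (∑ j, w B t j * ((if i = i0 then c j else 1) * (if i = i1 then c j else 1))) = 1 := by
    intro i _ hi
    simp only [Finset.mem_insert, Finset.mem_singleton, not_or] at hi
    simp [hi.1, hi.2, sum_w]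
  rw [← Finset.prod_subset (Finset.subset_univ ({i0, i1} : Finset (Fin m))) houter,
    Finset.prod_pair hne]
  simp [hne, Ne.symm hne, sq]


/-- total value of a configuration -/
noncomputable def T (m : ℕ) (x : Fin m → Fin (B+1)) : ℝ := ∑ i, ((x i : ℕ) : ℝ)

noncomputable def m2 (t : ℝ) : ℝ := ∑ j : Fin (B+1), w B t j * ((j : ℝ) * (j : ℝ))

lemma exp_T (m : ℕ) : ∑ x : Fin m → Fin (B+1), W B t m x * T B m x = m * mu B t := by
  have : ∀ x : Fin m → Fin (B+1), W B t m x * T B m x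
      = ∑ i, W B t m x * ((x i : ℕ) : ℝ) := by
    intro x; rw [T, Finset.mul_sum]
  rw [Finset.sum_congr rfl (fun x _ => this x), Finset.sum_comm]
  rw [Finset.sum_congr rfl (fun i0 _ => exp_coord B t m (fun j => ((j : ℕ) : ℝ)) i0)]
  simp [mu, mul_comm]

lemma exp_T_sq (m : ℕ) : ∑ x : Fin m → Fin (B+1), W B t m x * (T B m x) ^ 2
    = m * m2 B t + ((m : ℝ) ^ 2 - m) * (mu B t) ^ 2 := by
  have hc : ∀ x : Fin m → Fin (B+1), W B t m x * (T B m x) ^ 2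
      = ∑ i0, ∑ i1, W B t m x * (((x i0 : ℕ) : ℝ) * ((x i1 : ℕ) : ℝ)) := by
    intro x
    rw [sq, T, Finset.sum_mul_sum, Finset.mul_sum]
    exact Finset.sum_congr rfl fun i0 _ => by rw [Finset.mul_sum]
  rw [Finset.sum_congr rfl (fun x _ => hc x), Finset.sum_comm]
  rw [Finset.sum_congr rfl (fun i0 _ => Finset.sum_comm)]
  have hval : ∀ i0 i1 : Fin m, (∑ x : Fin m → Fin (B+1),
      W B t m x * (((x i0 : ℕ) : ℝ) * ((x i1 : ℕ) : ℝ)))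
      = if i0 = i1 then m2 B t else (mu B t) ^ 2 := by
    intro i0 i1
    by_cases h : i0 = i1
    · subst h
      rw [if_pos rfl]
      exact exp_coord B t m (fun j => ((j : ℕ) : ℝ) * ((j : ℕ) : ℝ)) i0
    · rw [if_neg h, exp_pair B t m (fun j => ((j : ℕ) : ℝ)) i0 i1 h]
      rfl
  have hrow : ∀ i0 : Fin m, ∑ i1 : Fin m, (∑ x : Fin m → Fin (B+1),
      W B t m x * (((x i0 : ℕ) : ℝ) * ((x i1 : ℕ) : ℝ)))
      = m2 B t + ((m : ℝ) - 1) * (mu B t) ^ 2 := by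
    intro i0
    rw [Finset.sum_congr rfl (fun i1 _ => hval i0 i1)]
    have hsplit : ∀ i1 : Fin m, (if i0 = i1 then m2 B t else (mu B t) ^ 2)
        = (mu B t) ^ 2 + (if i0 = i1 then m2 B t - (mu B t) ^ 2 else 0) := by
      intro i1; split <;> ring
    rw [Finset.sum_congr rfl (fun i1 _ => hsplit i1), Finset.sum_add_distrib,
      Finset.sum_const, Finset.sum_ite_eq]
    simp only [Finset.mem_univ, if_pos, Finset.card_univ, Fintype.card_fin, nsmul_eq_mul]
    ring
  rw [Finset.sum_congr rfl (fun i0 _ => hrow i0), Finset.sum_const, Finset.card_univ,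
    Fintype.card_fin, nsmul_eq_mul]
  ring

lemma var_le (m : ℕ) : ∑ x : Fin m → Fin (B+1),
    W B t m x * (T B m x - m * mu B t) ^ 2 ≤ m * (B : ℝ) ^ 2 := by
  have hexp : ∀ x : Fin m → Fin (B+1),
      W B t m x * (T B m x - m * mu B t) ^ 2
      = W B t m x * (T B m x) ^ 2 - (2 * (m * mu B t)) * (W B t m x * T B m x)
        + ((m : ℝ) * mu B t) ^ 2 * W B t m x := by
    intro x; ring
  rw [Finset.sum_congr rfl (fun x _ => hexp x)]
  rw [Finset.sum_add_distrib, Finset.sum_sub_distrib, ← Finset.mul_sum, ← Finset.mul_sum,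
    exp_T_sq, exp_T, sum_W]
  have hm2B : m2 B t ≤ (B : ℝ) ^ 2 := by
    have hle : ∀ j : Fin (B+1), w B t j * ((j : ℝ) * (j : ℝ)) ≤ w B t j * (B : ℝ) ^ 2 := by
      intro j
      have hj : ((j : ℕ) : ℝ) ≤ (B : ℝ) := by
        exact_mod_cast Nat.lt_succ_iff.mp j.2
      have hj0 : (0:ℝ) ≤ ((j : ℕ) : ℝ) := by positivity
      have : ((j : ℕ) : ℝ) * ((j : ℕ) : ℝ) ≤ (B : ℝ) ^ 2 := by nlinarith
      exact mul_le_mul_of_nonneg_left this (w_nonneg B t j)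
    calc m2 B t ≤ ∑ j : Fin (B+1), w B t j * (B : ℝ) ^ 2 := Finset.sum_le_sum fun j _ => hle j
      _ = (B : ℝ) ^ 2 := by rw [← Finset.sum_mul, sum_w, one_mul]
  have hmu2 : 0 ≤ (mu B t) ^ 2 := sq_nonneg _
  have hm0 : (0:ℝ) ≤ m := Nat.cast_nonneg m
  nlinarith


lemma T_eq (m : ℕ) (x : Fin m → Fin (B+1)) : T B m x = ((∑ i, (x i : ℕ) : ℕ) : ℝ) := by
  rw [T, Nat.cast_sum]

lemma W_eq (m : ℕ) (x : Fin m → Fin (B+1)) :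
    W B t m x = Real.exp (t * T B m x) / (S B t) ^ m := by
  rw [W]
  simp only [w]
  rw [Finset.prod_div_distrib]
  congr 1
  · rw [T, Finset.mul_sum, Real.exp_sum]
    exact Finset.prod_congr rfl fun i _ => by ring_nf
  · simp [Finset.prod_const, Finset.card_univ]

lemma upper_bound {t : ℝ} (ht : t ≤ 0) (m L : ℕ) :
    (N B m L : ℝ) ≤ Real.exp (-(t * L)) * (S B t) ^ m := by
  have h1 : (N B m L : ℝ) = ∑ _x ∈ A B m L, (1 : ℝ) := by simp [N]
  have h2 : ∀ x ∈ A B m L, (1 : ℝ) ≤ Real.exp (t * T B m x - t * L) := by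
    intro x hx
    rw [Real.one_le_exp_iff]
    have hTL : T B m x ≤ (L : ℝ) := by
      rw [T_eq]
      exact_mod_cast (Finset.mem_filter.mp hx).2
    nlinarith
  calc (N B m L : ℝ) ≤ ∑ x ∈ A B m L, Real.exp (t * T B m x - t * L) := by
        rw [h1]; exact Finset.sum_le_sum h2
    _ ≤ ∑ x : Fin m → Fin (B+1), Real.exp (t * T B m x - t * L) := by
        apply Finset.sum_le_sum_of_subset_of_nonneg (Finset.subset_univ _)
        intro x _ _; positivity
    _ = Real.exp (-(t * L)) * ∑ x : Fin m → Fin (B+1), Real.exp (t * T B m x) := by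
        rw [Finset.mul_sum]
        apply Finset.sum_congr rfl
        intro x _
        rw [← Real.exp_add]; ring_nf
    _ = Real.exp (-(t * L)) * (S B t) ^ m := by
        congr 1
        have : ∀ x : Fin m → Fin (B+1),
            Real.exp (t * T B m x) = ∏ i, Real.exp (((x i : ℕ) : ℝ) * t) := by
          intro x
          rw [T, Finset.mul_sum, Real.exp_sum]
          exact Finset.prod_congr rfl fun i _ => by ring_nf
        rw [Finset.sum_congr rfl (fun x _ => this x),
          sum_pi B m (fun _ j => Real.exp (((j : ℕ) : ℝ) * t))]
        simp [S, Finset.prod_const, Finset.card_univ]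


lemma lower_bound {t : ℝ} (ht : t ≤ 0) (m L : ℕ) {ε : ℝ} (hε : 0 < ε)
    (hm : 0 < m)
    (hL : (m : ℝ) * (mu B t + ε) ≤ L)
    (hmass : (B : ℝ) ^ 2 / (ε ^ 2 * m) ≤ 1 / 2) :
    Real.exp ((m : ℝ) * (f B t - t * (mu B t - ε))) / 2 ≤ (N B m L : ℝ) := by
  classical
  set μ := mu B t
  set good : Finset (Fin m → Fin (B+1)) :=
    Finset.univ.filter (fun x => |T B m x - m * μ| < ε * m) with hgood
  -- mass of the complement is at most 1/2
  have hbad : ∑ x ∈ Finset.univ.filter (fun x => ¬ (|T B m x - m * μ| < ε * m)),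
      W B t m x ≤ 1 / 2 := by
    have hstep : ∀ x ∈ Finset.univ.filter
        (fun x : Fin m → Fin (B+1) => ¬ (|T B m x - m * μ| < ε * m)),
        W B t m x ≤ W B t m x * ((T B m x - m * μ) / (ε * m)) ^ 2 := by
      intro x hx
      have hge : ε * m ≤ |T B m x - m * μ| := not_lt.mp (Finset.mem_filter.mp hx).2
      have hεm : (0:ℝ) < ε * m := by positivity
      have h1 : (1:ℝ) ≤ ((T B m x - m * μ) / (ε * m)) ^ 2 := by
        rw [div_pow, le_div_iff₀ (by positivity), one_mul]
        have h2 : (ε * m) ^ 2 ≤ |T B m x - m * μ| ^ 2 :=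
          pow_le_pow_left₀ hεm.le hge 2
        rw [sq_abs] at h2
        exact h2
      nlinarith [W_nonneg B t m x]
    calc ∑ x ∈ Finset.univ.filter
          (fun x : Fin m → Fin (B+1) => ¬ (|T B m x - m * μ| < ε * m)), W B t m x
        ≤ ∑ x ∈ Finset.univ.filter
          (fun x : Fin m → Fin (B+1) => ¬ (|T B m x - m * μ| < ε * m)),
            W B t m x * ((T B m x - m * μ) / (ε * m)) ^ 2 := Finset.sum_le_sum hstep
      _ ≤ ∑ x : Fin m → Fin (B+1), W B t m x * ((T B m x - m * μ) / (ε * m)) ^ 2 := by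
          apply Finset.sum_le_sum_of_subset_of_nonneg (Finset.filter_subset _ _)
          intro x _ _
          have := W_nonneg B t m x
          positivity
      _ = (1 / (ε * m) ^ 2) * ∑ x : Fin m → Fin (B+1),
            W B t m x * (T B m x - m * μ) ^ 2 := by
          rw [Finset.mul_sum]
          apply Finset.sum_congr rfl
          intro x _
          rw [div_pow]
          ring
      _ ≤ (1 / (ε * m) ^ 2) * (m * (B : ℝ) ^ 2) := by
          apply mul_le_mul_of_nonneg_left (var_le B t m) (by positivity)
      _ ≤ 1 / 2 := by
          have h1 : (1 / (ε * m) ^ 2) * (m * (B : ℝ) ^ 2) = (B : ℝ) ^ 2 / (ε ^ 2 * m) := by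
            field_simp
          rw [h1]; exact hmass
  have hgood_mass : 1 / 2 ≤ ∑ x ∈ good, W B t m x := by
    have hsplit := Finset.sum_filter_add_sum_filter_not Finset.univ
      (fun x : Fin m → Fin (B+1) => |T B m x - m * μ| < ε * m) (W B t m)
    rw [sum_W] at hsplit
    linarith [hbad]
  -- each good configuration is feasible
  have hsub : good ⊆ A B m L := by
    intro x hx
    have habs : |T B m x - m * μ| < ε * m := (Finset.mem_filter.mp hx).2
    have hTx : T B m x < m * μ + ε * m := by
      have := (abs_lt.mp habs).2
      linarith
    have hTL : T B m x ≤ (L : ℝ) := by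
      calc T B m x ≤ m * μ + ε * m := hTx.le
        _ = (m : ℝ) * (μ + ε) := by ring
        _ ≤ L := hL
    rw [A, Finset.mem_filter]
    refine ⟨Finset.mem_univ _, ?_⟩
    have := (T_eq B m x) ▸ hTL
    exact_mod_cast this
  -- each good configuration has small weight
  have hWbound : ∀ x ∈ good, W B t m x ≤ Real.exp ((m : ℝ) * (t * (μ - ε) - f B t)) := by
    intro x hx
    have habs : |T B m x - m * μ| < ε * m := (Finset.mem_filter.mp hx).2
    have hTx : m * μ - ε * m < T B m x := by
      have := (abs_lt.mp habs).1
      linarith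
    rw [W_eq]
    have hSpow : (S B t) ^ m = Real.exp ((m : ℝ) * f B t) := by
      rw [f, Real.exp_nat_mul, Real.exp_log (S_pos B t)]
    rw [hSpow, div_le_iff₀ (Real.exp_pos _), ← Real.exp_add]
    apply Real.exp_le_exp.mpr
    have : t * T B m x ≤ t * (m * (μ - ε)) := by
      apply mul_le_mul_of_nonpos_left _ ht
      nlinarith
    nlinarith
  -- conclude
  have hcard : ∑ x ∈ good, W B t m x
      ≤ (N B m L : ℝ) * Real.exp ((m : ℝ) * (t * (μ - ε) - f B t)) := by
    calc ∑ x ∈ good, W B t m x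
        ≤ ∑ _x ∈ good, Real.exp ((m : ℝ) * (t * (μ - ε) - f B t)) :=
          Finset.sum_le_sum hWbound
      _ = (good.card : ℝ) * Real.exp ((m : ℝ) * (t * (μ - ε) - f B t)) := by
          rw [Finset.sum_const, nsmul_eq_mul]
      _ ≤ (N B m L : ℝ) * Real.exp ((m : ℝ) * (t * (μ - ε) - f B t)) := by
          apply mul_le_mul_of_nonneg_right _ (Real.exp_pos _).le
          exact_mod_cast Finset.card_le_card hsub
  have hkey : 1 / 2 ≤ (N B m L : ℝ) * Real.exp ((m : ℝ) * (t * (μ - ε) - f B t)) :=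
    le_trans hgood_mass hcard
  have hexp : Real.exp ((m : ℝ) * (t * (μ - ε) - f B t))
      = (Real.exp ((m : ℝ) * (f B t - t * (μ - ε))))⁻¹ := by
    rw [← Real.exp_neg]
    congr 1
    ring
  rw [hexp] at hkey
  have hEpos : (0:ℝ) < Real.exp ((m : ℝ) * (f B t - t * (μ - ε))) := Real.exp_pos _
  calc Real.exp ((m : ℝ) * (f B t - t * (μ - ε))) / 2
      = (1 / 2) * Real.exp ((m : ℝ) * (f B t - t * (μ - ε))) := by ring
    _ ≤ ((N B m L : ℝ) * (Real.exp ((m : ℝ) * (f B t - t * (μ - ε))))⁻¹) *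
        Real.exp ((m : ℝ) * (f B t - t * (μ - ε))) := by
        apply mul_le_mul_of_nonneg_right hkey hEpos.le
    _ = (N B m L : ℝ) := by
        field_simp


lemma exp_add_exp (x y : ℝ) : 2 * Real.exp ((x + y) / 2) ≤ Real.exp x + Real.exp y := by
  have h1 : Real.exp (x/2) * Real.exp (x/2) = Real.exp x := by
    rw [← Real.exp_add]; ring_nf
  have h2 : Real.exp (y/2) * Real.exp (y/2) = Real.exp y := by
    rw [← Real.exp_add]; ring_nf
  have h3 : Real.exp (x/2) * Real.exp (y/2) = Real.exp ((x + y)/2) := by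
    rw [← Real.exp_add]; ring_nf
  nlinarith [sq_nonneg (Real.exp (x/2) - Real.exp (y/2))]

lemma S_ge (t : ℝ) : ((B : ℝ) + 1) * Real.exp ((B : ℝ) * t / 2) ≤ S B t := by
  have hrefl : S B t = ∑ j ∈ Finset.range (B+1), Real.exp (((B - j : ℕ) : ℝ) * t) := by
    rw [S_eq_range, ← Finset.sum_range_reflect]
    apply Finset.sum_congr rfl
    intro j hj
    congr 2
  have h2S : 2 * S B t = ∑ j ∈ Finset.range (B+1),
      (Real.exp ((j : ℝ) * t) + Real.exp (((B - j : ℕ) : ℝ) * t)) := by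
    rw [Finset.sum_add_distrib, ← S_eq_range, ← hrefl]
    ring
  have hterm : ∀ j ∈ Finset.range (B+1),
      2 * Real.exp ((B : ℝ) * t / 2)
        ≤ Real.exp ((j : ℝ) * t) + Real.exp (((B - j : ℕ) : ℝ) * t) := by
    intro j hj
    have hjB : j ≤ B := Nat.lt_succ_iff.mp (Finset.mem_range.mp hj)
    have := exp_add_exp ((j : ℝ) * t) (((B - j : ℕ) : ℝ) * t)
    have harg : ((j : ℝ) * t + ((B - j : ℕ) : ℝ) * t) / 2 = (B : ℝ) * t / 2 := by
      rw [Nat.cast_sub hjB]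
      ring
    rwa [harg] at this
  have hsum : ∑ j ∈ Finset.range (B+1), 2 * Real.exp ((B : ℝ) * t / 2) ≤ 2 * S B t := by
    rw [h2S]; exact Finset.sum_le_sum hterm
  rw [Finset.sum_const, Finset.card_range, nsmul_eq_mul] at hsum
  push_cast at hsum ⊢
  nlinarith

lemma mu_zero : mu B 0 = (B : ℝ) / 2 := by
  have hS0 : S B 0 = (B : ℝ) + 1 := by
    simp [S_eq_range]
  have hsum : ∑ j : Fin (B+1), ((j : ℕ) : ℝ) = (B : ℝ) * ((B : ℝ) + 1) / 2 := by
    rw [Fin.sum_univ_eq_sum_range (fun j => ((j : ℕ) : ℝ))]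
    have h2 : (∑ i ∈ Finset.range (B+1), i) * 2 = (B+1) * B := by
      simpa using Finset.sum_range_id_mul_two (B+1)
    have h2' : ((∑ i ∈ Finset.range (B+1), i : ℕ) : ℝ) * 2 = ((B:ℝ) + 1) * B := by
      exact_mod_cast h2
    push_cast at h2'
    linarith
  have hB1 : ((B : ℝ) + 1) ≠ 0 := by positivity
  rw [mu]
  simp only [w, hS0, mul_zero, Real.exp_zero]
  rw [← Finset.mul_sum, hsum]
  field_simp


lemma mu_le_of_nonpos {t : ℝ} (ht : t ≤ 0) :
    mu B t ≤ ((B : ℝ) + 1) * B * Real.exp t := by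
  rw [mu]
  have hterm : ∀ j : Fin (B+1), w B t j * ((j : ℕ) : ℝ) ≤ (B : ℝ) * Real.exp t := by
    intro j
    have hjB : ((j : ℕ) : ℝ) ≤ (B : ℝ) := by exact_mod_cast Nat.lt_succ_iff.mp j.2
    have hj0 : (0:ℝ) ≤ ((j : ℕ) : ℝ) := by positivity
    rcases Nat.eq_zero_or_pos (j : ℕ) with h0 | hpos
    · rw [h0]
      simp
      positivity
    · have h1j : (1 : ℝ) ≤ ((j : ℕ) : ℝ) := by exact_mod_cast hpos
      have hexp : Real.exp (((j : ℕ) : ℝ) * t) ≤ Real.exp t := by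
        apply Real.exp_le_exp.mpr
        nlinarith
      have hw : w B t j ≤ Real.exp t := by
        rw [w]
        calc Real.exp (((j : ℕ) : ℝ) * t) / S B t ≤ Real.exp (((j : ℕ) : ℝ) * t) / 1 := by
              apply div_le_div_of_nonneg_left (Real.exp_pos _).le one_pos (one_le_S B t)
          _ = Real.exp (((j : ℕ) : ℝ) * t) := by rw [div_one]
          _ ≤ Real.exp t := hexp
      calc w B t j * ((j : ℕ) : ℝ) ≤ Real.exp t * (B : ℝ) :=
            mul_le_mul hw hjB hj0 (Real.exp_pos _).le
        _ = (B : ℝ) * Real.exp t := by ring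
  calc ∑ j : Fin (B+1), w B t j * ((j : ℕ) : ℝ)
      ≤ ∑ _j : Fin (B+1), (B : ℝ) * Real.exp t := Finset.sum_le_sum fun j _ => hterm j
    _ = ((B : ℝ) + 1) * B * Real.exp t := by
        rw [Finset.sum_const, Finset.card_univ, Fintype.card_fin, nsmul_eq_mul]
        push_cast
        ring

lemma continuous_mu : Continuous (mu B) := by
  apply continuous_finset_sum
  intro j _
  apply Continuous.mul _ continuous_const
  apply Continuous.div
  · exact (Real.continuous_exp.comp (continuous_const.mul continuous_id))
  · apply continuous_finset_sum
    intro i _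
    exact (Real.continuous_exp.comp (continuous_const.mul continuous_id))
  · intro x
    exact (S_pos B x).ne'

lemma exists_tstar (hB : 0 < B) {r' : ℝ} (hr0 : 0 < r') (hrB : r' ≤ (B : ℝ) / 2) :
    ∃ t : ℝ, Real.log (r' / (((B : ℝ) + 1) * B + 1)) ≤ t ∧ t ≤ 0 ∧ mu B t = r' := by
  set C : ℝ := ((B : ℝ) + 1) * B + 1 with hC
  have hCpos : 0 < C := by positivity
  set T : ℝ := Real.log (r' / C) with hT
  have hrC : r' / C < 1 := by
    rw [div_lt_one hCpos]
    have hB2 : (B : ℝ)/2 ≤ ((B:ℝ)+1)*B := by nlinarith [(Nat.one_le_cast (α := ℝ)).mpr hB]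
    linarith
  have hrCpos : 0 < r' / C := by positivity
  have hT0 : T ≤ 0 := Real.log_nonpos hrCpos.le hrC.le
  have hmuT : mu B T < r' := by
    have h1 := mu_le_of_nonpos B hT0
    rw [hT, Real.exp_log hrCpos] at h1
    calc mu B T ≤ ((B : ℝ) + 1) * B * (r' / C) := h1
      _ < C * (r' / C) := by
          apply mul_lt_mul_of_pos_right _ hrCpos
          rw [hC]; linarith
      _ = r' := by field_simp
  have hmu0 : r' ≤ mu B 0 := by rw [mu_zero]; exact hrB
  have hIVT := intermediate_value_Icc hT0 (continuous_mu B).continuousOn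
  have hmem : r' ∈ Set.Icc (mu B T) (mu B 0) := ⟨hmuT.le, hmu0⟩
  obtain ⟨t, ht, hmut⟩ := hIVT hmem
  exact ⟨t, ht.1, ht.2, hmut⟩


lemma f_zero : f B 0 = Real.log ((B : ℝ) + 1) := by
  rw [f]
  congr 1
  simp [S_eq_range]

lemma f_ge_line (t : ℝ) : Real.log ((B : ℝ) + 1) + (B : ℝ) * t / 2 ≤ f B t := by
  have h := S_ge B t
  have h1 : Real.log (((B : ℝ) + 1) * Real.exp ((B : ℝ) * t / 2)) ≤ f B t := by
    rw [f]
    apply Real.log_le_log (by positivity) h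
  rwa [Real.log_mul (by positivity) (Real.exp_pos _).ne', Real.log_exp] at h1

lemma h_le_h_zero {r : ℝ} (hr0 : 0 ≤ r) (hrB : r ≤ (B : ℝ) / 2) {t : ℝ} (ht : 0 ≤ t) :
    t * r - f B t ≤ 0 * r - f B 0 := by
  have h1 := f_ge_line B t
  have h2 : t * r ≤ (B : ℝ) * t / 2 := by nlinarith
  rw [f_zero]
  nlinarith [Real.log_nonneg (by norm_num : (1:ℝ) ≤ (B:ℝ) + 1)]

lemma h_nonpos {r : ℝ} (hr0 : 0 ≤ r) (hrB : r ≤ (B : ℝ) / 2) (t : ℝ) :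
    t * r - f B t ≤ 0 := by
  rcases le_or_gt t 0 with ht | ht
  · have : t * r ≤ 0 := mul_nonpos_of_nonpos_of_nonneg ht hr0
    nlinarith [f_nonneg B t]
  · have := h_le_h_zero B hr0 hrB ht.le
    have hlog := Real.log_nonneg (by norm_num : (1:ℝ) ≤ (B:ℝ) + 1)
    rw [f_zero] at this
    nlinarith

lemma h_bdd {r : ℝ} (hr0 : 0 ≤ r) (hrB : r ≤ (B : ℝ) / 2) :
    BddAbove (Set.range fun t : ℝ => t * r - f B t) := by
  refine ⟨0, ?_⟩
  rintro y ⟨t, rfl⟩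
  exact h_nonpos B hr0 hrB t

lemma iSup_add_const (h : ℝ → ℝ) (hb : BddAbove (Set.range h)) (c : ℝ) :
    (⨆ t, (h t + c)) = (⨆ t, h t) + c := by
  have hb' : BddAbove (Set.range fun t => h t + c) := by
    obtain ⟨M, hM⟩ := hb
    refine ⟨M + c, ?_⟩
    rintro y ⟨t, rfl⟩
    exact add_le_add (hM ⟨t, rfl⟩) le_rfl
  apply le_antisymm
  · exact ciSup_le fun t => add_le_add (le_ciSup hb t) le_rfl
  · have : (⨆ t, h t) ≤ (⨆ t, (h t + c)) - c :=
      ciSup_le fun t => le_sub_iff_add_le.mpr (le_ciSup hb' t)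
    linarith


lemma S_le {t : ℝ} (ht : t ≤ 0) : S B t ≤ 1 + (B : ℝ) * Real.exp t := by
  rw [S_eq_range, Finset.sum_range_succ']
  simp only [Nat.cast_zero, zero_mul, Real.exp_zero]
  have hterm : ∀ j ∈ Finset.range B, Real.exp (((j + 1 : ℕ) : ℝ) * t) ≤ Real.exp t := by
    intro j _
    apply Real.exp_le_exp.mpr
    have : (1 : ℝ) ≤ ((j + 1 : ℕ) : ℝ) := by exact_mod_cast Nat.one_le_iff_ne_zero.mpr (by omega)
    nlinarith
  calc (∑ j ∈ Finset.range B, Real.exp (((j + 1 : ℕ) : ℝ) * t)) + 1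
      ≤ (∑ _j ∈ Finset.range B, Real.exp t) + 1 := by
        exact add_le_add (Finset.sum_le_sum hterm) le_rfl
    _ = 1 + (B : ℝ) * Real.exp t := by
        rw [Finset.sum_const, Finset.card_range, nsmul_eq_mul]; ring

lemma N_zero_L (m : ℕ) : N B m 0 = 1 := by
  rw [N, A, Finset.card_eq_one]
  refine ⟨fun _ => 0, ?_⟩
  ext x
  simp only [Finset.mem_filter, Finset.mem_univ, true_and, Finset.mem_singleton,
    Nat.le_zero, Finset.sum_eq_zero_iff]
  constructor
  · intro h
    funext i
    exact Fin.ext (by simpa using h i trivial)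
  · intro h
    subst h
    simp


end Stmt11

set_option maxHeartbeats 1000000 in
open Stmt11 in
theorem stmt_11 (B : ℕ) (hB : 0 < B) (r : ℝ) (hr0 : 0 ≤ r) (hr : r < (B : ℝ) / 2) :
    Tendsto (fun m : ℕ =>
        Real.log (Nat.card {x : Fin m → ℕ //
          (∑ i, x i ≤ ⌊r * m⌋₊) ∧ ∀ i, x i ≤ B}) / m)
      atTop (nhds (Real.log (B + 1) -
        ⨆ t : ℝ, (t * r -
          Real.log ((∑ j ∈ Finset.range (B + 1), Real.exp (j * t)) / (B + 1))))) := by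
  classical
  set Λ : ℝ := ⨆ t : ℝ, (t * r - Stmt11.f B t) with hΛdef
  have hrB : r ≤ (B : ℝ) / 2 := hr.le
  have hbdd := h_bdd B hr0 hrB
  have hval : (Real.log (B + 1) -
      ⨆ t : ℝ, (t * r - Real.log ((∑ j ∈ Finset.range (B + 1), Real.exp (j * t)) / (B + 1))))
      = -Λ := by
    have hfun : (fun t : ℝ => t * r -
        Real.log ((∑ j ∈ Finset.range (B + 1), Real.exp (j * t)) / (B + 1)))
        = fun t : ℝ => (t * r - Stmt11.f B t) + Real.log ((B : ℝ) + 1) := by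
      funext t
      rw [← S_eq_range, Real.log_div (S_pos B t).ne' (by positivity), Stmt11.f]
      ring
    rw [hfun, iSup_add_const _ hbdd]
    push_cast
    ring
  rw [hval]
  have hfun2 : (fun m : ℕ => Real.log (Nat.card {x : Fin m → ℕ //
      (∑ i, x i ≤ ⌊r * m⌋₊) ∧ ∀ i, x i ≤ B}) / m)
      = fun m : ℕ => Real.log (N B m ⌊r * (m:ℕ)⌋₊) / m := by
    funext m
    rw [card_eq]
  rw [hfun2]
  rcases eq_or_lt_of_le hr0 with hr0' | hrpos
  · -- case r = 0
    have hΛle : Λ ≤ 0 := ciSup_le fun t => h_nonpos B hr0 hrB t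
    have hΛge : 0 ≤ Λ := by
      by_contra hneg
      push_neg at hneg
      set ε : ℝ := -Λ / 2 with hε
      have hεpos : 0 < ε := by simp [hε]; linarith
      set t : ℝ := min 0 (Real.log (ε / ((B : ℝ) + 1))) with htdef
      have ht0 : t ≤ 0 := min_le_left _ _
      have hexpt : Real.exp t ≤ ε / ((B : ℝ) + 1) := by
        calc Real.exp t ≤ Real.exp (Real.log (ε / ((B : ℝ) + 1))) :=
              Real.exp_le_exp.mpr (min_le_right _ _)
          _ = ε / ((B : ℝ) + 1) := Real.exp_log (by positivity)
      have hft : Stmt11.f B t ≤ ε := by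
        have h1 : S B t ≤ 1 + (B : ℝ) * Real.exp t := S_le B ht0
        have h2 : Stmt11.f B t ≤ (1 + (B : ℝ) * Real.exp t) - 1 := by
          calc Stmt11.f B t ≤ Real.log (1 + (B : ℝ) * Real.exp t) :=
                Real.log_le_log (S_pos B t) h1
            _ ≤ (1 + (B : ℝ) * Real.exp t) - 1 :=
                Real.log_le_sub_one_of_pos (by positivity)
        have h3 : (B : ℝ) * Real.exp t ≤ (B : ℝ) * (ε / ((B : ℝ) + 1)) :=
          mul_le_mul_of_nonneg_left hexpt (by positivity)
        have h4 : (B : ℝ) * (ε / ((B : ℝ) + 1)) ≤ ε := by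
          rw [mul_div_assoc']
          rw [div_le_iff₀ (by positivity : (0:ℝ) < (B:ℝ) + 1)]
          nlinarith
        linarith
      have hmem : t * r - Stmt11.f B t ≤ Λ := le_ciSup hbdd t
      rw [← hr0'] at hmem
      simp only [mul_zero, zero_sub] at hmem
      have : -ε ≤ Λ := by linarith
      rw [hε] at this
      linarith
    have hΛ0 : Λ = 0 := le_antisymm hΛle hΛge
    have hNfun : (fun m : ℕ => Real.log (N B m ⌊r * (m:ℕ)⌋₊) / m) = fun _ : ℕ => (0:ℝ) := by
      funext m
      rw [← hr0']
      simp [N_zero_L]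
    rw [hNfun, hΛ0]
    simpa using tendsto_const_nhds
  · -- case 0 < r
    apply tendsto_order.2
    constructor
    · -- lower bound direction
      intro b hb
      set C : ℝ := ((B : ℝ) + 1) * B + 1 with hC
      have hCpos : 0 < C := by positivity
      set T0 : ℝ := Real.log ((r / 2) / C) with hT0
      have hT0neg : T0 ≤ 0 := by
        apply Real.log_nonpos (by positivity)
        rw [div_le_one hCpos]
        have : (1:ℝ) ≤ (B:ℝ) := by exact_mod_cast hB
        nlinarith
      set δ : ℝ := (-Λ - b) / 2 with hδ
      have hδpos : 0 < δ := by simp [hδ]; linarith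
      set η : ℝ := min (r / 2) (δ / (3 * (1 - T0))) with hη
      have h1T0 : 0 < 1 - T0 := by linarith
      have hηpos : 0 < η := lt_min (by linarith) (by positivity)
      have hηr2 : η ≤ r / 2 := min_le_left _ _
      have hηδ : η ≤ δ / (3 * (1 - T0)) := min_le_right _ _
      set r' : ℝ := r - η with hr'
      set ε : ℝ := η / 2 with hεdef
      have hεpos : 0 < ε := by positivity
      have hr'pos : 0 < r' := by simp [hr']; linarith
      have hr'ge : r / 2 ≤ r' := by simp [hr']; linarith
      have hr'B : r' ≤ (B : ℝ) / 2 := by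
        have : r' < r := by simp [hr']; linarith
        linarith
      obtain ⟨t', hTt', ht'0, hmut'⟩ := exists_tstar B hB hr'pos hr'B
      have ht'T0 : T0 ≤ t' := by
        refine le_trans ?_ hTt'
        rw [hT0]
        apply Real.log_le_log (by positivity)
        gcongr
      set K : ℝ := Stmt11.f B t' - t' * (r' - ε) with hK
      have hKb : b + δ ≤ K := by
        have h1 : t' * r - Stmt11.f B t' ≤ Λ := le_ciSup hbdd t'
        have h2 : T0 * (3 * η / 2) ≤ t' * (3 * η / 2) :=
          mul_le_mul_of_nonneg_right ht'T0 (by positivity)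
        have h3 : -(δ / 2) ≤ T0 * (3 * η / 2) := by
          have hh : (-T0) * (3 * η / 2) ≤ δ / 2 := by
            have h7 : η * (3 * (1 - T0)) ≤ δ := (le_div_iff₀ (by positivity)).mp hηδ
            have h4 : (3 : ℝ) * η / 2 ≤ δ / (2 * (1 - T0)) := by
              rw [div_le_div_iff₀ (by norm_num) (by positivity)]
              nlinarith
            have h5 : (-T0) * (3 * η / 2) ≤ (-T0) * (δ / (2 * (1 - T0))) := by
              apply mul_le_mul_of_nonneg_left h4 (by linarith)
            have e1 : (1 - T0) * (δ / (2 * (1 - T0))) = δ / 2 := by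
              field_simp
            have e2 : (-T0) * (δ / (2 * (1 - T0))) ≤ (1 - T0) * (δ / (2 * (1 - T0))) :=
              mul_le_mul_of_nonneg_right (by linarith) (by positivity)
            linarith
          linarith
        have hKeq : K = (Stmt11.f B t' - t' * r) + t' * (3 * η / 2) := by
          rw [hK, hr', hεdef]; ring
        rw [hKeq]
        have : -Λ ≤ Stmt11.f B t' - t' * r := by linarith
        rw [hδ] at *
        linarith
      have hcast := tendsto_natCast_atTop_atTop (R := ℝ)
      have hev1 : ∀ᶠ m : ℕ in atTop, (2 / η : ℝ) ≤ m := hcast.eventually_ge_atTop _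
      have hev2 : ∀ᶠ m : ℕ in atTop, (2 * (B:ℝ)^2 / ε^2 : ℝ) ≤ m := hcast.eventually_ge_atTop _
      have hev3 : ∀ᶠ m : ℕ in atTop, (Real.log 2 / δ + 1 : ℝ) ≤ m := hcast.eventually_ge_atTop _
      have hev4 : ∀ᶠ m : ℕ in atTop, 1 ≤ m := eventually_ge_atTop 1
      filter_upwards [hev1, hev2, hev3, hev4] with m hm1 hm2 hm3 hm4
      have hmpos : 0 < m := hm4
      have hmR : (0:ℝ) < m := by exact_mod_cast hmpos
      -- feasibility of the floor condition
      have hfloor : r * m - 1 < (⌊r * (m:ℕ)⌋₊ : ℝ) := by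
        have := Nat.sub_one_lt_floor (r * m)
        exact_mod_cast this
      have hL : (m : ℝ) * (mu B t' + ε) ≤ (⌊r * (m:ℕ)⌋₊ : ℝ) := by
        rw [hmut']
        have h1 : (m:ℝ) * (r' + ε) = r * m - (η / 2) * m := by
          rw [hr', hεdef]; ring
        have h2 : (1:ℝ) ≤ (η / 2) * m := by
          have h21 : (2 / η : ℝ) * (η / 2) ≤ (m : ℝ) * (η / 2) :=
            mul_le_mul_of_nonneg_right hm1 (by positivity)
          have e : (2 / η : ℝ) * (η / 2) = 1 := by field_simp
          nlinarith
        rw [h1]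
        linarith
      have hmass : (B : ℝ)^2 / (ε^2 * m) ≤ 1 / 2 := by
        rw [div_le_iff₀ (by positivity)]
        have h27 : 2 * (B:ℝ)^2 ≤ ε^2 * m := by
          have h28 : (2 * (B:ℝ)^2 / ε^2) * ε^2 ≤ (m : ℝ) * ε^2 :=
            mul_le_mul_of_nonneg_right hm2 (sq_nonneg ε)
          have e : (2 * (B:ℝ)^2 / ε^2) * ε^2 = 2 * (B:ℝ)^2 := by field_simp
          nlinarith
        linarith
      have hlb := lower_bound B ht'0 m ⌊r * (m:ℕ)⌋₊ hεpos hmpos hL hmass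
      rw [hmut'] at hlb
      have hNpos : (0:ℝ) < (N B m ⌊r * (m:ℕ)⌋₊ : ℝ) := by
        exact_mod_cast one_le_N B m ⌊r * (m:ℕ)⌋₊
      have hlog : (m : ℝ) * K - Real.log 2 ≤ Real.log (N B m ⌊r * (m:ℕ)⌋₊) := by
        have h1 : Real.log (Real.exp ((m : ℝ) * (Stmt11.f B t' - t' * (r' - ε))) / 2)
            ≤ Real.log (N B m ⌊r * (m:ℕ)⌋₊) :=
          Real.log_le_log (by positivity) hlb
        rw [Real.log_div (Real.exp_pos _).ne' (by norm_num), Real.log_exp] at h1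
        rw [← hK] at h1
        exact h1
      have hfinal : b < Real.log (N B m ⌊r * (m:ℕ)⌋₊) / m := by
        have h1 : K - Real.log 2 / m ≤ Real.log (N B m ⌊r * (m:ℕ)⌋₊) / m := by
          have h11 : ((m : ℝ) * K - Real.log 2) / m ≤ Real.log (N B m ⌊r * (m:ℕ)⌋₊) / m :=
            (div_le_div_iff_of_pos_right hmR).mpr hlog
          have e : ((m : ℝ) * K - Real.log 2) / m = K - Real.log 2 / m := by
            field_simp
          linarith
        have h2 : Real.log 2 / m < δ := by
          rw [div_lt_iff₀ hmR]
          have hlog2 : Real.log 2 < δ * m := by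
            have : Real.log 2 / δ + 1 ≤ (m:ℝ) := hm3
            have hd : Real.log 2 / δ < (m:ℝ) := by linarith
            rw [div_lt_iff₀ hδpos] at hd
            linarith [mul_comm δ (m:ℝ)]
          linarith [mul_comm δ (m:ℝ)]
        linarith
      exact hfinal
    · -- upper bound direction
      intro b hb
      have hΛb : -b < Λ := by linarith
      obtain ⟨t0, ht0⟩ := exists_lt_of_lt_ciSup hΛb
      set t : ℝ := min t0 0 with htdef
      have ht : t ≤ 0 := min_le_right _ _
      have hht : -b < t * r - Stmt11.f B t := by
        rcases le_or_gt t0 0 with h | h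
        · have : t = t0 := min_eq_left h
          rw [this]; exact ht0
        · have : t = 0 := min_eq_right h.le
          rw [this]
          have := h_le_h_zero B hr0 hrB h.le
          linarith
      filter_upwards [eventually_ge_atTop 1] with m hm1
      have hmR : (0:ℝ) < m := by exact_mod_cast hm1
      have hub := upper_bound B ht m ⌊r * (m:ℕ)⌋₊
      have hNpos : (0:ℝ) < (N B m ⌊r * (m:ℕ)⌋₊ : ℝ) := by
        exact_mod_cast one_le_N B m ⌊r * (m:ℕ)⌋₊
      have hlogN : Real.log (N B m ⌊r * (m:ℕ)⌋₊)
          ≤ -(t * (⌊r * (m:ℕ)⌋₊ : ℝ)) + (m : ℝ) * Stmt11.f B t := by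
        calc Real.log (N B m ⌊r * (m:ℕ)⌋₊)
            ≤ Real.log (Real.exp (-(t * (⌊r * (m:ℕ)⌋₊ : ℝ))) * (S B t)^m) :=
              Real.log_le_log hNpos hub
          _ = -(t * (⌊r * (m:ℕ)⌋₊ : ℝ)) + (m : ℝ) * Stmt11.f B t := by
              rw [Real.log_mul (Real.exp_pos _).ne' (pow_ne_zero m (S_pos B t).ne'), Real.log_exp,
                Real.log_pow, Stmt11.f]
      have hfl : (⌊r * (m:ℕ)⌋₊ : ℝ) ≤ r * m := Nat.floor_le (mul_nonneg hr0 (Nat.cast_nonneg m))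
      have htfl : -(t * (⌊r * (m:ℕ)⌋₊ : ℝ)) ≤ -t * (r * m) := by
        nlinarith
      have : Real.log (N B m ⌊r * (m:ℕ)⌋₊) / m ≤ Stmt11.f B t - t * r := by
        rw [div_le_iff₀ hmR]
        calc Real.log (N B m ⌊r * (m:ℕ)⌋₊)
            ≤ -(t * (⌊r * (m:ℕ)⌋₊ : ℝ)) + (m : ℝ) * Stmt11.f B t := hlogN
          _ ≤ -t * (r * m) + (m : ℝ) * Stmt11.f B t := by linarith
          _ = (Stmt11.f B t - t * r) * m := by ring
      linarith
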